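/- Let F : M^op → vect_F be a pointwise finite-dimensional sequentially continuous functor and let G ↪ F be a proper subfunctor (the inclusion is pointwise, and proper at some point). Then there exists a point w ∈ M and a natural epimorphism ρ : F → S_w onto the simple functor S_w at w such that ρ restricted to G is zero. -/

import Mathlib

open CategoryTheory CategoryTheory.Limits Opposite

noncomputable section

/-- The strip `M ⊂ ℝᵒᵖ × ℝ` between the two lines of slope `-1` given by
`x + y = a` and `x + y = b`. -/
def Strip (a b : ℝ) : Type := {p : ℝ × ℝ // a ≤ p.1 + p.2 ∧ p.1 + p.2 ≤ b}

namespace Strip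

variable {a b : ℝ}

/-- The partial order inherited from `ℝᵒᵖ × ℝ`. -/
instance : PartialOrder (Strip a b) where
  le p q := q.1.1 ≤ p.1.1 ∧ p.1.2 ≤ q.1.2
  le_refl p := ⟨le_rfl, le_rfl⟩
  le_trans p q r h h' := ⟨le_trans h'.1 h.1, le_trans h.2 h'.2⟩
  le_antisymm p q h h' :=
    Subtype.ext (Prod.ext (le_antisymm h'.1 h.1) (le_antisymm h.2 h'.2))

lemma le_def {p q : Strip a b} : p ≤ q ↔ q.1.1 ≤ p.1.1 ∧ p.1.2 ≤ q.1.2 := Iff.rfl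

/-- The glide reflection `T`. -/
def glide (p : Strip a b) : Strip a b :=
  ⟨(a - p.1.2, b - p.1.1), by
    obtain ⟨h1, h2⟩ := p.2; constructor <;> dsimp <;> linarith⟩

/-- The glide reflection `T` as an order isomorphism of `M`. -/
def glideEquiv : Strip a b ≃o Strip a b where
  toFun := glide
  invFun p := ⟨(b - p.1.2, a - p.1.1), by
    obtain ⟨h1, h2⟩ := p.2; constructor <;> dsimp <;> linarith⟩
  left_inv p := Subtype.ext (by simp [glide])
  right_inv p := Subtype.ext (by simp [glide])
  map_rel_iff' {p q} := by
    show (glide p ≤ glide q) ↔ _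
    simp only [le_def, glide]
    constructor <;> rintro ⟨h1, h2⟩ <;> exact ⟨by linarith, by linarith⟩

lemma glideEquiv_coords (p : Strip a b) :
    (glideEquiv p).1 = (a - p.1.2, b - p.1.1) := rfl

lemma glideEquiv_symm_coords (p : Strip a b) :
    (glideEquiv.symm p).1 = (b - p.1.2, a - p.1.1) := rfl

/-- The boundary `∂M = l₀ ∪ l₁`. -/
def OnBoundary (p : Strip a b) : Prop := p.1.1 + p.1.2 = a ∨ p.1.1 + p.1.2 = b

/-- The interior `int M`. -/
def InInterior (p : Strip a b) : Prop := a < p.1.1 + p.1.2 ∧ p.1.1 + p.1.2 < b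

/-- `u` belongs to `(↓v) ∩ int(↑ T⁻¹ v)`, the support of the contravariant block `B_v`;
equivalently, `v ∈ (↑u) ∩ int(↓ T u)`. -/
def BlockCond (v u : Strip a b) : Prop :=
  u ≤ v ∧ u.1.1 < b - v.1.2 ∧ a - v.1.1 < u.1.2

lemma blockCond_convex {v u u' u'' : Strip a b} (h1 : u ≤ u') (h2 : u' ≤ u'')
    (hu : BlockCond v u) (hu'' : BlockCond v u'') : BlockCond v u' :=
  ⟨le_trans h2 hu''.1, lt_of_le_of_lt h1.1 hu.2.1, lt_of_lt_of_le hu.2.2 h1.2⟩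

lemma simpleCond_convex {w u u' u'' : Strip a b} (h1 : u ≤ u') (h2 : u' ≤ u'')
    (hu : u = w) (hu'' : u'' = w) : u' = w :=
  le_antisymm (hu'' ▸ h2) (hu ▸ h1)

variable (a b) in
/-- An axis-aligned rectangle in `M` with corners `u ≤ v ≤ w` and remaining corner on `l₁`. -/
def IsCohomRect (u v w : Strip a b) : Prop :=
  u ≤ v ∧ v ≤ w ∧
    ((v.1.1 = u.1.1 ∧ v.1.2 = w.1.2 ∧ w.1.1 + u.1.2 = b) ∨
     (v.1.1 = w.1.1 ∧ v.1.2 = u.1.2 ∧ u.1.1 + w.1.2 = b))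

lemma IsCohomRect.w_le_glide {u v w : Strip a b} (h : IsCohomRect a b u v w) :
    w ≤ glideEquiv u := by
  obtain ⟨h1, h2, h3⟩ := h
  have hu := u.2; have hv := v.2; have hw := w.2
  obtain ⟨hle1, hle2⟩ := h1; obtain ⟨hle3, hle4⟩ := h2
  rw [le_def]
  rcases h3 with ⟨e1, e2, e3⟩ | ⟨e1, e2, e3⟩ <;>
    exact ⟨by rw [glideEquiv_coords]; dsimp; linarith,
           by rw [glideEquiv_coords]; dsimp; linarith⟩

lemma IsCohomRect.glideInv_le {u v w : Strip a b} (h : IsCohomRect a b u v w) :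
    glideEquiv.symm w ≤ u := by
  have := h.w_le_glide
  have h2 := glideEquiv.symm.monotone this
  simpa using h2

end Strip

section Functors

open Strip

variable (a b : ℝ) (K : Type) [Field K]

attribute [local instance] Classical.propDecidable

/-- auxiliary linear map used for the internal maps of `condFunctor`. -/
def condMap (P : Strip a b → Prop) (u u' : Strip a b) :
    ((PLift (P u') → K) →ₗ[K] (PLift (P u) → K)) where
  toFun f _ := if h' : P u' then f ⟨h'⟩ else 0
  map_add' f g := by funext h; by_cases h' : P u' <;> simp [h']
  map_smul' c f := by funext h; by_cases h' : P u' <;> simp [h']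

@[simp] lemma condMap_apply (P : Strip a b → Prop) (u u' : Strip a b)
    (f : PLift (P u') → K) (h : PLift (P u)) :
    condMap a b K P u u' f h = if h' : P u' then f ⟨h'⟩ else 0 := rfl

/-- A functor `Mᵒᵖ ⥤ Vect_K` supported on the set of points satisfying `P`,
with internal maps the identity wherever possible.  Both the contravariant blocks `B_v`
and the simple functors `S_w` arise this way. -/
def condFunctor (P : Strip a b → Prop)
    (hconv : ∀ ⦃u u' u'' : Strip a b⦄, u ≤ u' → u' ≤ u'' → P u → P u'' → P u') :
    (Strip a b)ᵒᵖ ⥤ ModuleCat K where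
  obj u := ModuleCat.of K (PLift (P u.unop) → K)
  map {x y} f := ModuleCat.ofHom (condMap a b K P y.unop x.unop)
  map_id x := by
    apply ModuleCat.hom_ext; apply LinearMap.ext; intro f
    funext h
    show (if h' : P x.unop then f ⟨h'⟩ else 0) = f h
    rw [dif_pos h.down]
  map_comp {x y z} f g := by
    apply ModuleCat.hom_ext; apply LinearMap.ext; intro v
    funext h
    show (if h' : P x.unop then v ⟨h'⟩ else 0)
        = condMap a b K P z.unop y.unop (condMap a b K P y.unop x.unop v) h
    by_cases hx : P x.unop
    · have hy : P y.unop := hconv (leOfHom g.unop) (leOfHom f.unop) h.down hx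
      simp [hx, hy]
    · by_cases hy : P y.unop <;> simp [hx, hy]

/-- The contravariant block `B_v`. -/
def Block (v : Strip a b) : (Strip a b)ᵒᵖ ⥤ ModuleCat K :=
  condFunctor a b K (BlockCond v) (fun _ _ _ h1 h2 hu hu'' => blockCond_convex h1 h2 hu hu'')

/-- The simple functor `S_w`. -/
def SimpleF (w : Strip a b) : (Strip a b)ᵒᵖ ⥤ ModuleCat K :=
  condFunctor a b K (fun u => u = w) (fun _ _ _ h1 h2 hu hu'' => simpleCond_convex h1 h2 hu hu'')

variable {a b K}

/-- The structure map `G(y) → G(x)` of a functor, for `x ≤ y` in `M`. -/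
def seqMap (G : (Strip a b)ᵒᵖ ⥤ ModuleCat K) {x y : Strip a b} (h : x ≤ y) :
    G.obj (op y) ⟶ G.obj (op x) :=
  G.map (homOfLE h).op

variable (a b K)

/-- Pointwise finite-dimensionality. -/
def Pfd (G : (Strip a b)ᵒᵖ ⥤ ModuleCat K) : Prop :=
  ∀ u : Strip a b, FiniteDimensional K (G.obj (op u))

/-- Vanishing on the boundary `∂M`. -/
def VanishesOnBoundary (G : (Strip a b)ᵒᵖ ⥤ ModuleCat K) : Prop :=
  ∀ u : Strip a b, OnBoundary u → ∀ x : G.obj (op u), x = 0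

/-- Sequential continuity: for every increasing sequence `u_k` converging to `L`, the
natural map `G L → lim_k G (u k)` is an isomorphism; elementarily, every compatible
family lifts uniquely. -/
def SeqContinuousF (G : (Strip a b)ᵒᵖ ⥤ ModuleCat K) : Prop :=
  ∀ (u : ℕ → Strip a b) (hu : Monotone u) (L : Strip a b) (hle : ∀ k, u k ≤ L),
    Filter.Tendsto (fun k => (u k).1) Filter.atTop (nhds L.1) →
    ∀ x : ∀ k, G.obj (op (u k)),
      (∀ k, seqMap G (hu (Nat.le_succ k)) (x (k + 1)) = x k) →
      ∃! y : G.obj (op L), ∀ k, seqMap G (hle k) y = x k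

/-- Cohomologicality: the long sequences associated to axis-aligned rectangles with one
corner on `l₁` are exact. -/
def Cohomological (G : (Strip a b)ᵒᵖ ⥤ ModuleCat K) : Prop :=
  VanishesOnBoundary a b K G ∧
  ∀ (u v w : Strip a b) (h : IsCohomRect a b u v w) (n : ℤ),
    (Function.Exact
        (seqMap G (((glideEquiv ^ n : Strip a b ≃o Strip a b)).monotone h.w_le_glide))
        (seqMap G (((glideEquiv ^ n : Strip a b ≃o Strip a b)).monotone h.2.1))) ∧
    (Function.Exact
        (seqMap G (((glideEquiv ^ n : Strip a b ≃o Strip a b)).monotone h.2.1))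
        (seqMap G (((glideEquiv ^ n : Strip a b ≃o Strip a b)).monotone h.1))) ∧
    (Function.Exact
        (seqMap G (((glideEquiv ^ n : Strip a b ≃o Strip a b)).monotone h.1))
        (seqMap G (((glideEquiv ^ n : Strip a b ≃o Strip a b)).monotone h.glideInv_le)))

/-- Bounded above support: the support is contained in the downset `{y - x ≤ c}`. -/
def BddAboveSupport (G : (Strip a b)ᵒᵖ ⥤ ModuleCat K) : Prop :=
  ∃ c : ℝ, ∀ u : Strip a b, c < u.1.2 - u.1.1 → ∀ x : G.obj (op u), x = 0

/-- Membership in the category `𝒥` of pfd, cohomological, sequentially continuous functors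
with bounded above support. -/
def MemJ (G : (Strip a b)ᵒᵖ ⥤ ModuleCat K) : Prop :=
  Pfd a b K G ∧ Cohomological a b K G ∧ SeqContinuousF a b K G ∧ BddAboveSupport a b K G

/-- `𝒥`-presentability. -/
def JPresentable (G : (Strip a b)ᵒᵖ ⥤ ModuleCat K) : Prop :=
  ∃ (H P : (Strip a b)ᵒᵖ ⥤ ModuleCat K) (_ : MemJ a b K H) (_ : MemJ a b K P)
    (f : H ⟶ P) (g : P ⟶ G),
      (∀ u : (Strip a b)ᵒᵖ, Function.Exact (f.app u) (g.app u)) ∧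
      (∀ u : (Strip a b)ᵒᵖ, Function.Surjective (g.app u))

/-- The 0-th Betti function `β⁰(G) : int M → ℕ`, `u ↦ dim Nat(G, S_u)`. -/
def beta0 (G : (Strip a b)ᵒᵖ ⥤ ModuleCat K) (v : Strip a b) : ℕ :=
  if InInterior v then Module.finrank K (G ⟶ SimpleF a b K v) else 0

/-- Admissible Betti functions. -/
def AdmissibleBetti (β : Strip a b → ℕ) : Prop :=
  (∀ v, ¬ InInterior v → β v = 0) ∧
  (∃ c : ℝ, ∀ v : Strip a b, c < v.1.2 - v.1.1 → β v = 0) ∧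
  (∀ u : Strip a b, {v : Strip a b | BlockCond v u ∧ β v ≠ 0}.Finite)

/-- Admissible Euler functions. -/
def AdmissibleEuler (μ : Strip a b → ℤ) : Prop :=
  AdmissibleBetti a b (fun v => (μ v).natAbs)

end Functors

section More

open Strip DirectSum

variable (a b : ℝ) (K : Type) [Field K]

attribute [local instance] Classical.propDecidable

lemma condMap_comp (P : Strip a b → Prop)
    (hconv : ∀ ⦃u u' u'' : Strip a b⦄, u ≤ u' → u' ≤ u'' → P u → P u'' → P u')
    {u u' u'' : Strip a b} (h1 : u ≤ u') (h2 : u' ≤ u'') :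
    condMap a b K P u u'' =
      (condMap a b K P u u').comp (condMap a b K P u' u'') := by
  refine LinearMap.ext fun f => funext fun h => ?_
  by_cases hx : P u''
  · have hy : P u' := hconv h1 h2 h.down hx
    simp [hx, hy]
  · by_cases hy : P u' <;> simp [hx, hy]

/-- A direct sum of `condFunctor`s for an indexed family of supports. -/
def condSumFunctor (ι : Type) (P : ι → Strip a b → Prop)
    (hconv : ∀ i, ∀ ⦃u u' u'' : Strip a b⦄, u ≤ u' → u' ≤ u'' → P i u → P i u'' → P i u') :
    (Strip a b)ᵒᵖ ⥤ ModuleCat K where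
  obj u := ModuleCat.of K (⨁ i : ι, (PLift (P i u.unop) → K))
  map {x y} f := ModuleCat.ofHom
    (DFinsupp.mapRange.linearMap (fun i => condMap a b K (P i) y.unop x.unop))
  map_id x := by
    have e : (fun i => condMap a b K (P i) x.unop x.unop)
        = fun i : ι => (LinearMap.id : (PLift (P i x.unop) → K) →ₗ[K] _) := by
      funext i
      refine LinearMap.ext fun f => funext fun h => ?_
      show (if h' : P i x.unop then f ⟨h'⟩ else 0) = f h
      rw [dif_pos h.down]
    change ModuleCat.ofHom
      (DFinsupp.mapRange.linearMap fun i => condMap a b K (P i) x.unop x.unop) = _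
    rw [e, DFinsupp.mapRange.linearMap_id]
    rfl
  map_comp {x y z} f g := by
    have e : (fun i => condMap a b K (P i) z.unop x.unop)
        = fun i => (condMap a b K (P i) z.unop y.unop).comp
            (condMap a b K (P i) y.unop x.unop) := by
      funext i
      exact condMap_comp a b K (P i) (hconv i) (leOfHom g.unop) (leOfHom f.unop)
    change ModuleCat.ofHom
      (DFinsupp.mapRange.linearMap fun i => condMap a b K (P i) z.unop x.unop) = _
    rw [e, DFinsupp.mapRange.linearMap_comp]
    rfl

/-- The direct sum `⊕_{v} B_v^{m v}` of contravariant blocks with multiplicities `m`. -/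
def blockSum (m : Strip a b → ℕ) : (Strip a b)ᵒᵖ ⥤ ModuleCat K :=
  condSumFunctor a b K (Σ v : Strip a b, Fin (m v)) (fun s u => BlockCond s.1 u)
    (fun _ _ _ _ h1 h2 hu hu'' => blockCond_convex h1 h2 hu hu'')

/-- The pointwise direct sum of a sequence of functors. -/
def sumFunctor (Q : ℕ → (Strip a b)ᵒᵖ ⥤ ModuleCat K) :
    (Strip a b)ᵒᵖ ⥤ ModuleCat K where
  obj u := ModuleCat.of K (⨁ n : ℕ, (Q n).obj u)
  map {x y} f := ModuleCat.ofHom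
    (DFinsupp.mapRange.linearMap (fun n => ((Q n).map f).hom))
  map_id x := by
    have e : (fun n => ((Q n).map (𝟙 x)).hom)
        = fun n : ℕ => LinearMap.id := by
      funext n; rw [CategoryTheory.Functor.map_id]; rfl
    change ModuleCat.ofHom (DFinsupp.mapRange.linearMap
      fun n => ((Q n).map (𝟙 x)).hom) = _
    rw [e, DFinsupp.mapRange.linearMap_id]
    rfl
  map_comp {x y z} f g := by
    have e : (fun n => ((Q n).map (f ≫ g)).hom)
        = fun n => (((Q n).map g).hom.comp
            ((Q n).map f).hom) := by
      funext n; rw [CategoryTheory.Functor.map_comp]; rfl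
    change ModuleCat.ofHom (DFinsupp.mapRange.linearMap
      fun n => ((Q n).map (f ≫ g)).hom) = _
    rw [e, DFinsupp.mapRange.linearMap_comp]
    rfl

/-- Precomposition with the glide reflection `T`, as an endofunctor of `Mᵒᵖ`. -/
def Tfun : (Strip a b)ᵒᵖ ⥤ (Strip a b)ᵒᵖ :=
  ((glideEquiv (a := a) (b := b)).monotone.functor).op

/-- A resolution of `G` by functors in `𝒥` (hence a projective resolution in `𝒞`). -/
def IsJResolution (G : (Strip a b)ᵒᵖ ⥤ ModuleCat K)
    (P : ℕ → (Strip a b)ᵒᵖ ⥤ ModuleCat K)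
    (d : ∀ n, P (n + 1) ⟶ P n) (ε : P 0 ⟶ G) : Prop :=
  (∀ n, MemJ a b K (P n)) ∧
  (∀ u, Function.Surjective ((ε.app u))) ∧
  (∀ u, Function.Exact ((d 0).app u) (ε.app u)) ∧
  (∀ n u, Function.Exact ((d (n + 1)).app u) ((d n).app u))

/-- Equivariance of a resolution: `P (n+3) = P n ∘ T` and `d (n+3) = - d n ∘ T`. -/
def IsEquivariantRes (P : ℕ → (Strip a b)ᵒᵖ ⥤ ModuleCat K)
    (d : ∀ n, P (n + 1) ⟶ P n) : Prop :=
  ∃ hEq : ∀ n, P (n + 3) = Tfun a b ⋙ P n,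
    ∀ n, d (n + 3) =
      eqToHom (hEq (n + 1)) ≫ (-(Functor.whiskerLeft (Tfun a b) (d n))) ≫ eqToHom (hEq n).symm

/-- The cochain complex `Nat(P_•, S_v)` obtained by applying `Nat(-, S_v)` to a resolution. -/
def dStar (P : ℕ → (Strip a b)ᵒᵖ ⥤ ModuleCat K) (d : ∀ n, P (n + 1) ⟶ P n)
    (v : Strip a b) (n : ℕ) :
    (P n ⟶ SimpleF a b K v) →ₗ[K] (P (n + 1) ⟶ SimpleF a b K v) :=
  Linear.leftComp K (SimpleF a b K v) (d n)

/-- `dim_K Extⁿ_𝒞(G, S_v)`, computed as the `n`-th cohomology of `Nat(P_•, S_v)` for a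
projective resolution `P_•` of `G` in `𝒞`. -/
def extDim (P : ℕ → (Strip a b)ᵒᵖ ⥤ ModuleCat K) (d : ∀ n, P (n + 1) ⟶ P n)
    (v : Strip a b) : ℕ → ℕ
  | 0 => Module.finrank K (LinearMap.ker (dStar a b K P d v 0))
  | (n + 1) =>
      Module.finrank K
        (↥(LinearMap.ker (dStar a b K P d v (n + 1))) ⧸
          Submodule.comap (LinearMap.ker (dStar a b K P d v (n + 1))).subtype
            (LinearMap.range (dStar a b K P d v n)))

/-- The partial alternating sum `Σ_{n < N} (-1)ⁿ dim Extⁿ(F, S_v)`. -/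
def eulerAt (P : ℕ → (Strip a b)ᵒᵖ ⥤ ModuleCat K) (d : ∀ n, P (n + 1) ⟶ P n)
    (v : Strip a b) (N : ℕ) : ℤ :=
  ∑ n ∈ Finset.range N, (-1 : ℤ) ^ n * (extDim a b K P d v n : ℤ)

/-- Objects of `𝒥`. -/
def JObj : Type 1 := {G : (Strip a b)ᵒᵖ ⥤ ModuleCat.{0} K // MemJ a b K G}

/-- Objects of `pres(𝒥)`. -/
def PresObj : Type 1 := {G : (Strip a b)ᵒᵖ ⥤ ModuleCat.{0} K // JPresentable a b K G}

/-- Relations defining `K₀` of `𝒥`: `[Q] = [P] + [R]` for every (automatically split)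
short exact sequence `0 → P → Q → R → 0` in `𝒥`. -/
def K0JRelations : Set (FreeAbelianGroup (JObj a b K)) :=
  {x | ∃ (P Q R : JObj a b K) (κ : P.1 ⟶ Q.1) (ρ : Q.1 ⟶ R.1),
    (∀ u, Function.Injective (κ.app u)) ∧ (∀ u, Function.Surjective (ρ.app u)) ∧
    (∀ u, Function.Exact (κ.app u) (ρ.app u)) ∧
    x = FreeAbelianGroup.of Q - FreeAbelianGroup.of P - FreeAbelianGroup.of R}

/-- The Grothendieck group `K₀(𝒥)`. -/
def K0J : Type 1 :=
  FreeAbelianGroup (JObj a b K) ⧸ AddSubgroup.closure (K0JRelations a b K)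

instance : AddCommGroup (K0J a b K) := by unfold K0J; infer_instance

/-- The class `[G] ∈ K₀(𝒥)`. -/
def K0Jmk (G : JObj a b K) : K0J a b K :=
  QuotientAddGroup.mk (FreeAbelianGroup.of G)

/-- Relations defining `K₀` of `pres(𝒥)`: `[Q] = [P] + [R]` for every short exact
sequence `0 → P → Q → R → 0` of `𝒥`-presentable functors. -/
def K0PresRelations : Set (FreeAbelianGroup (PresObj a b K)) :=
  {x | ∃ (P Q R : PresObj a b K) (κ : P.1 ⟶ Q.1) (ρ : Q.1 ⟶ R.1),
    (∀ u, Function.Injective (κ.app u)) ∧ (∀ u, Function.Surjective (ρ.app u)) ∧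
    (∀ u, Function.Exact (κ.app u) (ρ.app u)) ∧
    x = FreeAbelianGroup.of Q - FreeAbelianGroup.of P - FreeAbelianGroup.of R}

/-- The Grothendieck group `K₀(pres 𝒥)`. -/
def K0Pres : Type 1 :=
  FreeAbelianGroup (PresObj a b K) ⧸ AddSubgroup.closure (K0PresRelations a b K)

instance : AddCommGroup (K0Pres a b K) := by unfold K0Pres; infer_instance

/-- The class `[G] ∈ K₀(pres 𝒥)`. -/
def K0PresMk (G : PresObj a b K) : K0Pres a b K :=
  QuotientAddGroup.mk (FreeAbelianGroup.of G)

/-- The abelian group `G(𝔹)` of admissible Euler functions. -/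
def eulerGroup : AddSubgroup (Strip a b → ℤ) where
  carrier := {μ | AdmissibleEuler a b μ}
  zero_mem' := by
    refine ⟨fun v _ => rfl, ⟨0, fun v _ => rfl⟩, fun u => ?_⟩
    convert Set.finite_empty
    ext v; simp
  add_mem' := by
    rintro μ ν ⟨h1, ⟨c1, h2⟩, h3⟩ ⟨h1', ⟨c2, h2'⟩, h3'⟩
    refine ⟨fun v hv => ?_, ⟨max c1 c2, fun v hv => ?_⟩, fun u => ?_⟩
    · simp only [Pi.add_apply]
      rw [show μ v = 0 by simpa using h1 v hv, show ν v = 0 by simpa using h1' v hv]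
      rfl
    · simp only [Pi.add_apply]
      rw [show μ v = 0 by simpa using h2 v (lt_of_le_of_lt (le_max_left _ _) hv),
        show ν v = 0 by simpa using h2' v (lt_of_le_of_lt (le_max_right _ _) hv)]
      rfl
    · refine Set.Finite.subset ((h3 u).union (h3' u)) ?_
      rintro v ⟨hb, hne⟩
      by_cases hμ : μ v = 0
      · exact Or.inr ⟨hb, by simp only [Pi.add_apply, hμ, zero_add] at hne; simpa using hne⟩
      · exact Or.inl ⟨hb, by simpa using hμ⟩
  neg_mem' := by
    rintro μ ⟨h1, h2, h3⟩
    refine ⟨fun v hv => ?_, ?_, fun u => ?_⟩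
    · simp only [Pi.neg_apply, Int.natAbs_neg]; exact h1 v hv
    · obtain ⟨c, hc⟩ := h2
      exact ⟨c, fun v hv => by simp only [Pi.neg_apply, Int.natAbs_neg]; exact hc v hv⟩
    · refine Set.Finite.subset (h3 u) ?_
      rintro v ⟨hb, hne⟩
      exact ⟨hb, by simpa [Int.natAbs_neg] using hne⟩

/-- Subfunctors of a functor `G : Mᵒᵖ ⥤ Vect_K`. -/
def Subfunctor (G : (Strip a b)ᵒᵖ ⥤ ModuleCat K) : Type :=
  {S : ∀ u : Strip a b, Submodule K (G.obj (op u)) //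
    ∀ (u u' : Strip a b) (h : u' ≤ u), Submodule.map (seqMap G h).hom (S u) ≤ S u'}

end More

end

section AuxMaxPair

open Strip

attribute [local instance] Classical.propDecidable

variable {a b : ℝ} {K : Type} [Field K]

private lemma seqMap_trans_apply (F : (Strip a b)ᵒᵖ ⥤ ModuleCat K)
    {x y z : Strip a b} (h1 : x ≤ y) (h2 : y ≤ z) (h3 : x ≤ z) (v : F.obj (op z)) :
    seqMap F h3 v = seqMap F h1 (seqMap F h2 v) := by
  have e : seqMap F h3 = seqMap F h2 ≫ seqMap F h1 := by
    unfold seqMap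
    rw [← F.map_comp]
    exact congrArg F.map (Quiver.Hom.unop_inj (Subsingleton.elim _ _))
  rw [e]; rfl

private lemma seqMap_id_apply (F : (Strip a b)ᵒᵖ ⥤ ModuleCat K)
    {x : Strip a b} (h : x ≤ x) (v : F.obj (op x)) : seqMap F h v = v := by
  have e : seqMap F h = 𝟙 (F.obj (op x)) := by
    unfold seqMap
    have e2 : (homOfLE h).op = 𝟙 (op x) := by
      apply Quiver.Hom.unop_inj; apply Subsingleton.elim
    rw [e2, F.map_id]
  rw [e]; rfl

private lemma seqMap_nat_apply (F : (Strip a b)ᵒᵖ ⥤ ModuleCat K)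
    {x y : (Strip a b)ᵒᵖ} (f : x ⟶ y) {w : Strip a b}
    (h1 : w ≤ y.unop) (h2 : w ≤ x.unop) (v : F.obj x) :
    seqMap F h1 ((F.map f) v) = seqMap F h2 v := by
  have e : f ≫ (homOfLE h1).op = (homOfLE h2).op := by
    apply Quiver.Hom.unop_inj; apply Subsingleton.elim
  calc seqMap F h1 ((F.map f) v) = (F.map f ≫ F.map (homOfLE h1).op) v := rfl
    _ = F.map (f ≫ (homOfLE h1).op) v := by rw [F.map_comp]
    _ = F.map ((homOfLE h2).op) v := by rw [e]
    _ = seqMap F h2 v := rfl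

private lemma mem_range_cast (F : (Strip a b)ᵒᵖ ⥤ ModuleCat K) (ws : ℕ → Strip a b)
    {j n n' : ℕ} (e : n = n')
    (h : ws j ≤ ws n) (h' : ws j ≤ ws n') (t : F.obj (op (ws n))) :
    seqMap F h t ∈
      LinearMap.range (seqMap F h').hom := by
  subst e
  exact ⟨t, rfl⟩

set_option maxHeartbeats 1600000 in
private lemma exists_max_pair
    (F : (Strip a b)ᵒᵖ ⥤ ModuleCat K)
    (hpfd : Pfd a b K F) (hseq : SeqContinuousF a b K F)
    (hvan : VanishesOnBoundary a b K F)
    (G : Subfunctor a b K F) (hproper : ∃ u : Strip a b, G.1 u ≠ ⊤) :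
    ∃ (w : Strip a b) (l : F.obj (op w) →ₗ[K] K), l ≠ 0 ∧ (∀ x ∈ G.1 w, l x = 0) ∧
      ∀ (v : Strip a b) (h : w ≤ v), v ≠ w → ∀ t : F.obj (op v), l (seqMap F h t) = 0 := by
  classical
  haveI hfd : ∀ u : Strip a b, FiniteDimensional K (F.obj (op u)) := hpfd
  let α := {p : Σ w : Strip a b, F.obj (op w) →ₗ[K] K //
      p.2 ≠ 0 ∧ ∀ x ∈ G.1 p.1, p.2 x = 0}
  let r : α → α → Prop := fun p q =>
    ∃ h : p.1.1 ≤ q.1.1, ∀ t, q.1.2 t = p.1.2 (seqMap F h t)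
  have hrefl : ∀ p, r p p := fun p => ⟨le_rfl, fun t => by rw [seqMap_id_apply]⟩
  have htrans : ∀ {p q s : α}, r p q → r q s → r p s := by
    rintro p q s ⟨h1, e1⟩ ⟨h2, e2⟩
    exact ⟨h1.trans h2, fun t => by
      rw [e2, e1, ← seqMap_trans_apply F h1 h2 (h1.trans h2)]⟩
  -- nonemptiness
  obtain ⟨u₀, hu₀⟩ := hproper
  have hx0 : ∃ x : F.obj (op u₀), x ∉ G.1 u₀ := by
    by_contra hcon
    push_neg at hcon
    exact hu₀ (Submodule.eq_top_iff'.2 hcon)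
  obtain ⟨x₀, hx₀⟩ := hx0
  have hq0 : (Submodule.Quotient.mk x₀ : F.obj (op u₀) ⧸ G.1 u₀) ≠ 0 := by
    simpa [Submodule.Quotient.mk_eq_zero] using hx₀
  have hphi : ∃ φ : Module.Dual K (F.obj (op u₀) ⧸ G.1 u₀),
      φ (Submodule.Quotient.mk x₀) ≠ 0 := by
    by_contra hcon
    push_neg at hcon
    exact hq0 ((Module.forall_dual_apply_eq_zero_iff K _).1 hcon)
  obtain ⟨φ, hφ⟩ := hphi
  have hp₀ne : (φ.comp (G.1 u₀).mkQ : F.obj (op u₀) →ₗ[K] K) ≠ 0 := by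
    intro hEq
    apply hφ
    have := congrArg (fun f : F.obj (op u₀) →ₗ[K] K => f x₀) hEq
    simpa using this
  let p₀ : α := ⟨⟨u₀, φ.comp (G.1 u₀).mkQ⟩, hp₀ne, by
    intro y hy
    have : (G.1 u₀).mkQ y = 0 := (Submodule.Quotient.mk_eq_zero _).2 hy
    simp [LinearMap.comp_apply, this]⟩
  -- interiority of base point of any pair
  have hInt : ∀ p : α, a < p.1.1.1.1 + p.1.1.1.2 ∧ p.1.1.1.1 + p.1.1.1.2 < b := by
    intro p
    have hv : ∃ v, p.1.2 v ≠ 0 := by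
      by_contra hcon; push_neg at hcon
      exact p.2.1 (LinearMap.ext fun v => by simpa using hcon v)
    obtain ⟨v, hv⟩ := hv
    have hnb : ¬ OnBoundary p.1.1 := fun hb => hv (by rw [hvan p.1.1 hb v, map_zero])
    unfold OnBoundary at hnb
    push_neg at hnb
    obtain ⟨h1, h2⟩ := p.1.1.2
    exact ⟨lt_of_le_of_ne h1 (Ne.symm hnb.1), lt_of_le_of_ne h2 hnb.2⟩
  -- every chain is bounded above
  have hub : ∀ (c : Set α), IsChain r c → ∃ ub, ∀ p ∈ c, r p ub := by
    intro c hc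
    rcases Set.eq_empty_or_nonempty c with rfl | ⟨p₁, hp₁⟩
    · exact ⟨p₀, fun p hp => absurd hp (Set.notMem_empty p)⟩
    haveI : IsRefl α r := ⟨hrefl⟩
    obtain ⟨hi₁, hi₂⟩ := hInt p₁
    have hab : a ≤ b := le_trans p₁.1.1.2.1 p₁.1.1.2.2
    -- boundedness of coordinates along the chain
    have hbdd : ∀ p ∈ c, a - p₁.1.1.1.2 < p.1.1.1.1 ∧ p.1.1.1.2 < b - p₁.1.1.1.1 := by
      intro p hp
      rcases hc.total hp₁ hp with hr | hr
      · obtain ⟨hle, hcomp⟩ := hr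
        constructor
        · by_contra hcon
          push_neg at hcon
          set q : Strip a b := ⟨(a - p₁.1.1.1.2, p₁.1.1.1.2), by
            constructor <;> (show _ ≤ _) <;> dsimp <;> linarith⟩ with hqdef
          have h1 : p₁.1.1 ≤ q := ⟨by dsimp; linarith, le_rfl⟩
          have h2 : q ≤ p.1.1 := ⟨by dsimp; linarith, hle.2⟩
          apply p.2.1
          apply LinearMap.ext
          intro t
          rw [hcomp t, seqMap_trans_apply F h1 h2 hle t,
            hvan q (Or.inl (by show (a - p₁.1.1.1.2) + p₁.1.1.1.2 = a; ring)) (seqMap F h2 t), map_zero, map_zero,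
            LinearMap.zero_apply]
        · by_contra hcon
          push_neg at hcon
          set q : Strip a b := ⟨(p₁.1.1.1.1, b - p₁.1.1.1.1), by
            constructor <;> (show _ ≤ _) <;> dsimp <;> linarith⟩ with hqdef
          have h1 : p₁.1.1 ≤ q := ⟨le_rfl, by dsimp; linarith⟩
          have h2 : q ≤ p.1.1 := ⟨hle.1, by dsimp; linarith⟩
          apply p.2.1
          apply LinearMap.ext
          intro t
          rw [hcomp t, seqMap_trans_apply F h1 h2 hle t,
            hvan q (Or.inr (by show p₁.1.1.1.1 + (b - p₁.1.1.1.1) = b; ring)) (seqMap F h2 t), map_zero, map_zero,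
            LinearMap.zero_apply]
      · obtain ⟨hle, -⟩ := hr
        have h1 := hle.1
        have h2 := hle.2
        exact ⟨by linarith, by linarith⟩
    set xs := (fun p : α => p.1.1.1.1) '' c with hxs
    set ys := (fun p : α => p.1.1.1.2) '' c with hys
    have xs_ne : xs.Nonempty := ⟨_, ⟨p₁, hp₁, rfl⟩⟩
    have ys_ne : ys.Nonempty := ⟨_, ⟨p₁, hp₁, rfl⟩⟩
    have xs_bdd : BddBelow xs := ⟨a - p₁.1.1.1.2, by
      rintro _ ⟨p, hp, rfl⟩; exact (hbdd p hp).1.le⟩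
    have ys_bdd : BddAbove ys := ⟨b - p₁.1.1.1.1, by
      rintro _ ⟨p, hp, rfl⟩; exact (hbdd p hp).2.le⟩
    have hsum1 : a ≤ sInf xs + sSup ys := by
      have h1 : a - sSup ys ≤ sInf xs := by
        apply le_csInf xs_ne
        rintro _ ⟨p, hp, rfl⟩
        have h2 : p.1.1.1.2 ≤ sSup ys := le_csSup ys_bdd ⟨p, hp, rfl⟩
        have h3 := p.1.1.2.1
        linarith
      linarith
    have hsum2 : sInf xs + sSup ys ≤ b := by
      have h1 : sSup ys ≤ b - sInf xs := by
        apply csSup_le ys_ne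
        rintro _ ⟨p, hp, rfl⟩
        have h2 : sInf xs ≤ p.1.1.1.1 := csInf_le xs_bdd ⟨p, hp, rfl⟩
        have h3 := p.1.1.2.2
        linarith
      linarith
    set L : Strip a b := ⟨(sInf xs, sSup ys), hsum1, hsum2⟩ with hLdef
    have hleL : ∀ p ∈ c, p.1.1 ≤ L := fun p hp =>
      ⟨csInf_le xs_bdd ⟨p, hp, rfl⟩, le_csSup ys_bdd ⟨p, hp, rfl⟩⟩
    -- a sequence of chain elements approaching L
    have hnear : ∀ k : ℕ, ∃ p, p ∈ c ∧ p.1.1.1.1 < sInf xs + 1/((k:ℝ)+1) ∧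
        sSup ys - 1/((k:ℝ)+1) < p.1.1.1.2 := by
      intro k
      have hkpos : (0:ℝ) < 1/((k:ℝ)+1) := by positivity
      obtain ⟨x', hx'mem, hx'⟩ := exists_lt_of_csInf_lt xs_ne
        (show sInf xs < sInf xs + 1/((k:ℝ)+1) by linarith)
      obtain ⟨pa, hpa, rfl⟩ := hx'mem
      obtain ⟨y', hy'mem, hy'⟩ := exists_lt_of_lt_csSup ys_ne
        (show sSup ys - 1/((k:ℝ)+1) < sSup ys by linarith)
      obtain ⟨pb, hpb, rfl⟩ := hy'mem
      rcases hc.total hpa hpb with hr | hr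
      · exact ⟨pb, hpb, lt_of_le_of_lt hr.choose.1 hx', hy'⟩
      · exact ⟨pa, hpa, hx', lt_of_lt_of_le hy' hr.choose.2⟩
    choose cs hcs1 hcs2 hcs3 using hnear
    obtain ⟨useq, humem, hustep, hucoord⟩ :
        ∃ u : ℕ → α, (∀ k, u k ∈ c) ∧ (∀ k, r (u k) (u (k+1))) ∧
          ∀ k, (u k).1.1.1.1 < sInf xs + 1/((k:ℝ)+1) ∧
            sSup ys - 1/((k:ℝ)+1) < (u k).1.1.1.2 := by
      let u : ℕ → α := fun k =>
        Nat.rec (cs 0) (fun k uk => if r uk (cs (k+1)) then cs (k+1) else uk) k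
      have hsucc : ∀ k, u (k+1) = if r (u k) (cs (k+1)) then cs (k+1) else u k :=
        fun k => rfl
      have hmem : ∀ k, u k ∈ c := by
        intro k
        induction k with
        | zero => exact hcs1 0
        | succ k ih =>
          rw [hsucc]
          split
          · exact hcs1 (k+1)
          · exact ih
      refine ⟨u, hmem, fun k => ?_, fun k => ?_⟩
      · rw [hsucc]
        split
        · assumption
        · exact hrefl _
      · cases k with
        | zero => exact ⟨hcs2 0, hcs3 0⟩
        | succ k =>
          rw [hsucc]
          split
          · exact ⟨hcs2 (k+1), hcs3 (k+1)⟩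
          · next hno =>
            rcases hc.total (hmem k) (hcs1 (k+1)) with hr | hr
            · exact absurd hr hno
            · obtain ⟨hle, -⟩ := hr
              exact ⟨lt_of_le_of_lt hle.1 (hcs2 (k+1)), lt_of_lt_of_le (hcs3 (k+1)) hle.2⟩
    have humono : ∀ j k, j ≤ k → r (useq j) (useq k) := by
      intro j k hjk
      induction hjk with
      | refl => exact hrefl _
      | step h ih => exact htrans ih (hustep _)
    let ws : ℕ → Strip a b := fun k => (useq k).1.1
    have wsmono : Monotone ws := monotone_nat_of_le_succ (fun k => (hustep k).choose)
    have hwsle : ∀ k, ws k ≤ L := fun k => hleL _ (humem k)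
    have htend : Filter.Tendsto (fun k => (ws k).1) Filter.atTop (nhds L.1) := by
      have tx : Filter.Tendsto (fun k => (ws k).1.1) Filter.atTop (nhds (sInf xs)) := by
        apply tendsto_of_tendsto_of_tendsto_of_le_of_le
          (g := fun _ : ℕ => sInf xs) (h := fun k : ℕ => sInf xs + 1/((k:ℝ)+1))
        · exact tendsto_const_nhds
        · simpa using (tendsto_const_nhds : Filter.Tendsto (fun _ : ℕ => sInf xs) Filter.atTop (nhds (sInf xs))).add tendsto_one_div_add_atTop_nhds_zero_nat
        · intro k; exact (hwsle k).1
        · intro k; exact (hucoord k).1.le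
      have ty : Filter.Tendsto (fun k => (ws k).1.2) Filter.atTop (nhds (sSup ys)) := by
        apply tendsto_of_tendsto_of_tendsto_of_le_of_le
          (g := fun k : ℕ => sSup ys - 1/((k:ℝ)+1)) (h := fun _ : ℕ => sSup ys)
        · simpa using (tendsto_const_nhds : Filter.Tendsto (fun _ : ℕ => sSup ys) Filter.atTop (nhds (sSup ys))).sub tendsto_one_div_add_atTop_nhds_zero_nat
        · exact tendsto_const_nhds
        · intro k; exact (hucoord k).2.le
        · intro k; exact (hwsle k).2
      exact tx.prodMk_nhds ty
    -- stabilization of images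
    have hws : ∀ k m : ℕ, ws k ≤ ws (k+m) := fun k m => wsmono (Nat.le_add_right k m)
    have hstab : ∀ k : ℕ, ∃ N : ℕ, ∀ m : ℕ,
        LinearMap.range (seqMap F (hws k N)).hom ≤
        LinearMap.range (seqMap F (hws k m)).hom := by
      intro k
      have hanti : ∀ m m' : ℕ, m ≤ m' →
          LinearMap.range (seqMap F (hws k m')).hom ≤
          LinearMap.range (seqMap F (hws k m)).hom := by
        intro m m' hmm'
        rintro z ⟨t, rfl⟩
        exact ⟨seqMap F (wsmono (by omega : k+m ≤ k+m')) t,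
          (seqMap_trans_apply F (hws k m) (wsmono (by omega)) (hws k m') t).symm⟩
      set fn : ℕ → ℕ := fun m => Module.finrank K
        (LinearMap.range (seqMap F (hws k m)).hom) with hfn
      obtain ⟨N, hN⟩ : ∃ N, fn N = sInf (Set.range fn) := Nat.sInf_mem (Set.range_nonempty fn)
      refine ⟨N, fun m => ?_⟩
      rcases le_or_gt m N with h | h
      · exact hanti m N h
      · have hle2 := hanti N m h.le
        have heq : LinearMap.range (seqMap F (hws k m)).hom =
            LinearMap.range (seqMap F (hws k N)).hom := by
          apply Submodule.eq_of_le_of_finrank_le hle2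
          rw [show Module.finrank K _ = fn N from rfl, hN]
          exact Nat.sInf_le ⟨m, rfl⟩
        exact heq.ge
    choose Nk hNk using hstab
    -- surjectivity between stabilized images
    have hsurj : ∀ (k : ℕ) (z : F.obj (op (ws k))),
        z ∈ LinearMap.range (seqMap F (hws k (Nk k))).hom →
        ∃ z' : F.obj (op (ws (k+1))),
          z' ∈ LinearMap.range (seqMap F (hws (k+1) (Nk (k+1)))).hom ∧
          seqMap F (wsmono (Nat.le_succ k)) z' = z := by
      intro k z hz
      obtain ⟨t, ht⟩ := hNk k (Nk (k+1) + 1) hz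
      have e : k + (Nk (k+1) + 1) = (k+1) + Nk (k+1) := by omega
      have hA : ws (k+1) ≤ ws (k + (Nk (k+1) + 1)) := wsmono (by omega)
      refine ⟨seqMap F hA t, mem_range_cast F ws e hA (hws (k+1) (Nk (k+1))) t, ?_⟩
      rw [← ht]
      exact (seqMap_trans_apply F (wsmono (Nat.le_succ k)) hA (hws k (Nk (k+1)+1)) t).symm
    -- base element with nonzero value
    obtain ⟨h0N, hcomp0N⟩ := humono 0 (0 + Nk 0) (Nat.le_add_right 0 _)
    have hlN : ∃ t : F.obj (op (ws (0 + Nk 0))), (useq (0 + Nk 0)).1.2 t ≠ 0 := by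
      by_contra hcon
      push_neg at hcon
      exact (useq (0 + Nk 0)).2.1 (LinearMap.ext fun t => by simpa using hcon t)
    obtain ⟨t0, ht0⟩ := hlN
    have hz₀ : (useq 0).1.2 (seqMap F h0N t0) ≠ 0 := by
      rw [← hcomp0N t0]; exact ht0
    have hz₀mem : seqMap F h0N t0 ∈ LinearMap.range (seqMap F (hws 0 (Nk 0))).hom := ⟨t0, rfl⟩
    -- compatible sequence through the base element
    obtain ⟨Zx, hZ0, hZcompat⟩ :
        ∃ Zx : ∀ k : ℕ, F.obj (op (ws k)), Zx 0 = seqMap F h0N t0 ∧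
          ∀ k, seqMap F (wsmono (Nat.le_succ k)) (Zx (k+1)) = Zx k := by
      let Z : ∀ k : ℕ, {z : F.obj (op (ws k)) //
          z ∈ LinearMap.range (seqMap F (hws k (Nk k))).hom} :=
        fun k => Nat.rec ⟨seqMap F h0N t0, hz₀mem⟩
          (fun k zk => ⟨(hsurj k zk.1 zk.2).choose, (hsurj k zk.1 zk.2).choose_spec.1⟩) k
      exact ⟨fun k => (Z k).1, rfl, fun k => (hsurj k (Z k).1 (Z k).2).choose_spec.2⟩
    obtain ⟨y, hy, -⟩ := hseq ws wsmono L hwsle htend Zx hZcompat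
    -- the upper bound
    have hyval : (useq 0).1.2 (seqMap F (hwsle 0) y) ≠ 0 := by
      rw [hy 0, hZ0]; exact hz₀
    have hLne : ((useq 0).1.2.comp (seqMap F (hwsle 0)).hom : F.obj (op L) →ₗ[K] K) ≠ 0 := by
      intro hEq
      apply hyval
      have := congrArg (fun f : F.obj (op L) →ₗ[K] K => f y) hEq
      simpa using this
    have hLvan : ∀ x ∈ G.1 L, ((useq 0).1.2.comp (seqMap F (hwsle 0)).hom) x = 0 := by
      intro x hx
      exact (useq 0).2.2 _ (G.2 L (ws 0) (hwsle 0) (Submodule.mem_map_of_mem hx))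
    refine ⟨⟨⟨L, (useq 0).1.2.comp (seqMap F (hwsle 0)).hom⟩, hLne, hLvan⟩, ?_⟩
    intro p hp
    refine ⟨hleL p hp, fun t => ?_⟩
    rcases hc.total (humem 0) hp with hr | hr
    · obtain ⟨h01, hcmp⟩ := hr
      show (useq 0).1.2 (seqMap F (hwsle 0) t) = p.1.2 (seqMap F (hleL p hp) t)
      rw [hcmp (seqMap F (hleL p hp) t), ← seqMap_trans_apply F h01 (hleL p hp) (hwsle 0) t]
    · obtain ⟨hp0, hcmp⟩ := hr
      show (useq 0).1.2 (seqMap F (hwsle 0) t) = p.1.2 (seqMap F (hleL p hp) t)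
      rw [hcmp (seqMap F (hwsle 0) t), ← seqMap_trans_apply F hp0 (hwsle 0) (hleL p hp) t]
  -- Zorn's lemma
  obtain ⟨m, hm⟩ := exists_maximal_of_chains_bounded hub (fun {p q s} h1 h2 => htrans h1 h2)
  refine ⟨m.1.1, m.1.2, m.2.1, m.2.2, ?_⟩
  intro v h hne t
  by_contra hcon
  have hvan' : ∀ x ∈ G.1 v,
      (m.1.2.comp (seqMap F h).hom) x = 0 :=
    fun x hx => m.2.2 _ (G.2 v m.1.1 h (Submodule.mem_map_of_mem hx))
  have hqne : (m.1.2.comp (seqMap F h).hom :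
      F.obj (op v) →ₗ[K] K) ≠ 0 := by
    intro hEq
    apply hcon
    have := congrArg (fun f : F.obj (op v) →ₗ[K] K => f t) hEq
    simpa using this
  have hrmq : r m ⟨⟨v, m.1.2.comp (seqMap F h).hom⟩,
      hqne, hvan'⟩ := ⟨h, fun s => rfl⟩
  obtain ⟨h', -⟩ := hm _ hrmq
  exact hne (le_antisymm h' h)

end AuxMaxPair


/-- a proper subfunctor of a pfd sequentially continuous functor lies in the
kernel of a natural epimorphism onto some simple functor. -/
theorem proper_subfunctor_killed_by_simple_quotient (a b : ℝ) (K : Type) [Field K]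
    (F : (Strip a b)ᵒᵖ ⥤ ModuleCat K)
    (hpfd : Pfd a b K F) (hseq : SeqContinuousF a b K F)
    (hvan : VanishesOnBoundary a b K F)
    (G : Subfunctor a b K F) (hproper : ∃ u : Strip a b, G.1 u ≠ ⊤) :
    ∃ (w : Strip a b) (ρ : F ⟶ SimpleF a b K w),
      (∀ u : (Strip a b)ᵒᵖ, Function.Surjective (ρ.app u)) ∧
      (∀ u : Strip a b, ∀ x ∈ G.1 u, ρ.app (op u) x = 0) := by
  classical
  obtain ⟨w, l, hl0, hlG, hlmax⟩ := exists_max_pair F hpfd hseq hvan G hproper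
  obtain ⟨v₀, hv₀⟩ : ∃ v, l v ≠ 0 := by
    by_contra hcon
    push_neg at hcon
    exact hl0 (LinearMap.ext fun v => by simpa using hcon v)
  refine ⟨w,
    { app := fun u => ModuleCat.ofHom
        { toFun := fun x => fun h => l (seqMap F (le_of_eq h.down.symm) x)
          map_add' := fun x y => funext fun h => by simp [map_add]
          map_smul' := fun c x => funext fun h => by simp [map_smul] }
      naturality := ?_ }, ?_, ?_⟩
  · intro x y f
    ext v
    funext h
    show l (seqMap F (le_of_eq h.down.symm) ((F.map f) v)) =
      condMap a b K (fun u => u = w) y.unop x.unop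
        (fun h' => l (seqMap F (le_of_eq h'.down.symm) v)) h
    rw [condMap_apply]
    by_cases h' : x.unop = w
    · rw [dif_pos h']
      exact congrArg l (seqMap_nat_apply F f (le_of_eq h.down.symm) (le_of_eq h'.symm) v)
    · rw [dif_neg h']
      have h2 : w ≤ x.unop := le_trans (le_of_eq h.down.symm) (leOfHom f.unop)
      rw [seqMap_nat_apply F f (le_of_eq h.down.symm) h2 v]
      exact hlmax x.unop h2 (fun e => h' e) v
  · intro u
    by_cases hu : u.unop = w
    · have e : u = op w := by rw [← hu, op_unop]
      subst e
      intro t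
      refine ⟨(t ⟨rfl⟩ * (l v₀)⁻¹) • v₀, ?_⟩
      funext h
      show l (seqMap F (le_of_eq h.down.symm) ((t ⟨rfl⟩ * (l v₀)⁻¹) • v₀)) = t h
      rw [seqMap_id_apply, map_smul, smul_eq_mul, mul_assoc, inv_mul_cancel₀ hv₀, mul_one]
    · intro t
      exact ⟨0, funext fun h => absurd h.down hu⟩
  · intro u x hx
    funext h
    show l (seqMap F (le_of_eq h.down.symm) x) = 0
    exact hlG _ (G.2 u w (le_of_eq h.down.symm) (Submodule.mem_map_of_mem hx))
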